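/- Let R, C, D, r, c, s, ρ be real numbers with r > R ≥ 0 and ρ > 0. Assume that (i) R²·ρ² + (C² − 2·R·D) = (R·s − C)², and (ii) for every β with s − ρ < β < s + ρ one has β·r ≤ c and c ≤ C + β·(r − R). Then ρ² ≤ (C² − 2·R·D)/(4·r·(r − R)). -/
import Mathlib

namespace BridgelandNotes

/-- The numerical higher-rank wall bound: if `r > R ≥ 0`, `ρ > 0`,
`R²·ρ² + (C² − 2·R·D) = (R·s − C)²`, and for every `β` with `s − ρ < β < s + ρ` one
has `β·r ≤ c` and `c ≤ C + β·(r − R)`, then `ρ² ≤ (C² − 2·R·D)/(4·r·(r − R))`. -/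
theorem higher_rank_wall_bound (R C D r c s ρ : ℝ)
    (hrR : R < r) (hR : 0 ≤ R) (hρ : 0 < ρ)
    (h1 : R ^ 2 * ρ ^ 2 + (C ^ 2 - 2 * R * D) = (R * s - C) ^ 2)
    (h2 : ∀ β : ℝ, s - ρ < β → β < s + ρ → β * r ≤ c ∧ c ≤ C + β * (r - R)) :
    ρ ^ 2 ≤ (C ^ 2 - 2 * R * D) / (4 * r * (r - R)) := by
  have hr : 0 < r := lt_of_le_of_lt hR hrR
  have h2r : 0 < 2 * r - R := by linarith
  have key : s * R + ρ * (2 * r - R) ≤ C := by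
    apply le_of_forall_pos_le_add
    intro ε hε
    set δ := min ρ (ε / (2 * r - R)) with hδdef
    have hδpos : 0 < δ := lt_min hρ (div_pos hε h2r)
    have hδρ : δ ≤ ρ := min_le_left _ _
    have hδε : δ * (2 * r - R) ≤ ε := by
      have := min_le_right ρ (ε / (2 * r - R))
      calc δ * (2 * r - R) ≤ (ε / (2 * r - R)) * (2 * r - R) := by
            exact mul_le_mul_of_nonneg_right this (le_of_lt h2r)
        _ = ε := div_mul_cancel₀ ε (ne_of_gt h2r)
    have hb1 := (h2 (s + ρ - δ) (by linarith) (by linarith)).1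
    have hb2 := (h2 (s - ρ + δ) (by linarith) (by linarith)).2
    nlinarith [hb1, hb2, hδε]
  have hX : ρ * (2 * r - R) ≤ C - R * s := by linarith
  have hXpos : 0 ≤ C - R * s := le_trans (by positivity) hX
  rw [le_div_iff₀ (by nlinarith [mul_pos hr (sub_pos.2 hrR)] : (0:ℝ) < 4 * r * (r - R))]
  nlinarith [mul_nonneg (sub_nonneg.2 hX) (by nlinarith [mul_pos hρ h2r] : (0:ℝ) ≤ C - R * s + ρ * (2 * r - R))]

end BridgelandNotes
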